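/- Let D be a presentable category and C a locally small complete category. A functor F : D^op → C preserves limits if and only if F admits a left adjoint. -/

import Mathlib

open CategoryTheory CategoryTheory.Limits Opposite

universe v u w

/-- A 1-categorical stand-in for presentability: `D` is presentable if it is a
reflective full subcategory of a presheaf category on a small category. -/
def IsPresentableCat (D : Type u) [Category.{v} D] : Prop :=
  ∃ (S : Type v) (_ : SmallCategory S) (R : D ⥤ (Sᵒᵖ ⥤ Type v)),
    R.Full ∧ R.Faithful ∧ R.IsRightAdjoint

theorem adjAux_left {D : Type u} [Category.{v} D] {C : Type w} [Category.{v} C]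
    {A : Dᵒᵖ ⥤ C} {B : Cᵒᵖ ⥤ D} (h : A.rightOp ⊣ B)
    (c' c : C) (X : Dᵒᵖ) (f : c' ⟶ c) (g : c ⟶ A.obj X) :
    ((h.homEquiv (unop X) (op c')) (g.op ≫ f.op)).op =
      (B.map f.op).op ≫ ((h.homEquiv (unop X) (op c)) g.op).op := by
  rw [Adjunction.homEquiv_unit, Adjunction.homEquiv_unit]
  simp [op_comp]

theorem adjAux_right {D : Type u} [Category.{v} D] {C : Type w} [Category.{v} C]
    {A : Dᵒᵖ ⥤ C} {B : Cᵒᵖ ⥤ D} (h : A.rightOp ⊣ B)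
    (c : C) (X X' : Dᵒᵖ) (f : B.rightOp.obj c ⟶ X) (g : X ⟶ X') :
    ((h.homEquiv (unop X') (op c)).symm (g.unop ≫ f.unop)).unop =
      ((h.homEquiv (unop X) (op c)).symm f.unop).unop ≫ A.map g := by
  rw [Adjunction.homEquiv_counit, Adjunction.homEquiv_counit]
  simp [op_comp]

/-- Transfer an adjunction through `rightOp`/`leftOp`. -/
noncomputable def adjAux {D : Type u} [Category.{v} D] {C : Type w} [Category.{v} C]
    {A : Dᵒᵖ ⥤ C} {B : Cᵒᵖ ⥤ D} (h : A.rightOp ⊣ B) : B.rightOp ⊣ A :=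
  Adjunction.mkOfHomEquiv
    { homEquiv := fun c X =>
        { toFun := fun f => ((h.homEquiv X.unop (op c)).symm f.unop).unop
          invFun := fun g => (h.homEquiv X.unop (op c) g.op).op
          left_inv := fun f => by simp
          right_inv := fun g => by simp }
      homEquiv_naturality_left_symm := fun {c' c X} f g =>
        adjAux_left h c' c X f g
      homEquiv_naturality_right := fun {c X X'} f g =>
        adjAux_right h c X X' f g }

set_option maxHeartbeats 1000000 in
set_option synthInstance.maxHeartbeats 400000 in
/-- Let `D` be a presentable category and `C` a locally small complete category.
A functor `F : Dᵒᵖ ⥤ C` preserves limits iff it admits a left adjoint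
(i.e. `F` is a right adjoint). -/
theorem stmt0 {D : Type u} [Category.{v} D] {C : Type w} [Category.{v} C]
    (hD : IsPresentableCat D) [HasLimitsOfSize.{v, v} C]
    (F : Dᵒᵖ ⥤ C) :
    PreservesLimitsOfSize.{v, v} F ↔ F.IsRightAdjoint := by
  constructor
  · intro hF
    obtain ⟨S, instS, R, hfull, hfaithful, hadj⟩ := hD
    letI := hfull
    letI := hfaithful
    letI := hadj
    letI : Reflective R :=
      { L := R.leftAdjoint
        adj := Adjunction.ofIsRightAdjoint R }
    let L : (Sᵒᵖ ⥤ Type v) ⥤ D := reflector R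
    let adj1 : L ⊣ R := reflectorAdjunction R
    let H : D ⥤ Cᵒᵖ := F.rightOp
    haveI : PreservesColimitsOfSize.{v, v} H := preservesColimitsOfSize_rightOp F
    haveI : PreservesColimitsOfSize.{v, v} L := adj1.leftAdjoint_preservesColimits
    let K : (Sᵒᵖ ⥤ Type v) ⥤ Cᵒᵖ := L ⋙ H
    haveI : PreservesColimitsOfSize.{v, v} K := inferInstance
    haveI : HasColimitsOfSize.{v, v} Cᵒᵖ := hasColimits_op_of_hasLimits
    haveI : K.IsLeftAdjoint := Presheaf.isLeftAdjoint_of_preservesColimits K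
    let adj2 : K ⊣ K.rightAdjoint := Adjunction.ofIsLeftAdjoint K
    let K' : Cᵒᵖ ⥤ (Sᵒᵖ ⥤ Type v) := K.rightAdjoint
    -- every `K'.obj Y` is in the essential image of `R`
    have hsplit : ∀ Y : Cᵒᵖ, IsSplitMono (adj1.unit.app (K'.obj Y)) := by
      intro Y
      refine ⟨⟨⟨(adj2.homEquiv _ Y)
        (H.map (adj1.counit.app (L.obj (K'.obj Y))) ≫ adj2.counit.app Y), ?_⟩⟩⟩
      rw [← Adjunction.homEquiv_naturality_left]
      have h1 : K.map (adj1.unit.app (K'.obj Y)) ≫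
          (H.map (adj1.counit.app (L.obj (K'.obj Y))) ≫ adj2.counit.app Y) =
          adj2.counit.app Y := by
        rw [show K.map (adj1.unit.app (K'.obj Y)) =
          H.map (L.map (adj1.unit.app (K'.obj Y))) from rfl,
          ← Functor.map_comp_assoc]
        erw [adj1.left_triangle_components]
        simp
      rw [h1]
      simp [Adjunction.homEquiv_unit]
      exact adj2.right_triangle_components Y
    have hiso : ∀ Y : Cᵒᵖ, IsIso (adj1.unit.app (K'.obj Y)) := by
      intro Y
      haveI := hsplit Y
      exact Functor.essImage.unit_isIso (mem_essImage_of_unit_isSplitMono (i := R))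
    let ν : K' ≅ K' ⋙ (L ⋙ R) :=
      NatIso.ofComponents (fun Y => @asIso _ _ _ _ _ (hiso Y))
        (fun f => adj1.unit.naturality (K'.map f))
    let comm1 : R ⋙ K ≅ H ⋙ 𝟭 Cᵒᵖ :=
      Functor.isoWhiskerRight (asIso adj1.counit) H ≪≫ H.leftUnitor ≪≫ H.rightUnitor.symm
    let comm2 : 𝟭 Cᵒᵖ ⋙ K' ≅ (K' ⋙ L) ⋙ R := K'.leftUnitor ≪≫ ν
    let adjH : H ⊣ K' ⋙ L :=
      adj2.restrictFullyFaithful (Functor.fullyFaithfulOfReflective R)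
        (Functor.FullyFaithful.id _) comm1 comm2
    exact ⟨(K' ⋙ L).rightOp, ⟨adjAux adjH⟩⟩
  · intro h
    exact (Adjunction.ofIsRightAdjoint F).rightAdjoint_preservesLimits
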